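/- Define C(η) := 2η + 3(√(1 + η⁴/4 − 2η²) − (1 − η²/2)) for η ∈ [2/3, √3−1] (the radicand 1 + η⁴/4 − 2η² is nonnegative on this interval). Then: (i) C(2/3) = √13/3 − 1 > 0; (ii) C(√3−1) = 1 − √3 < 0; (iii) C(η) < √13/3 − 1 for every η ∈ (2/3, √3−1], so the supremum of C over (2/3, √3−1] equals √13/3 − 1 and is not attained; and (iv) there exists δ > 0 such that C(η) > 0 for all η ∈ (2/3, 2/3 + δ). (The optimal violation of the LSW inequality for trine axes is C_max/6 = (√13/3 − 1)/6 ≈ 0.03364, approached as η → 2/3.) -/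
import Mathlib

noncomputable section

/-- C(η) = 2η + 3(√(1 + η⁴/4 - 2η²) - (1 - η²/2)). -/
def Cfun (η : ℝ) : ℝ := 2*η + 3*(Real.sqrt (1 + η^4/4 - 2*η^2) - (1 - η^2/2))

lemma sqrt3_sq : Real.sqrt 3 ^ 2 = 3 := Real.sq_sqrt (by norm_num)
lemma sqrt13_sq : Real.sqrt 13 ^ 2 = 13 := Real.sq_sqrt (by norm_num)

lemma sqrt3_lb : 1.7 < Real.sqrt 3 := by
  nlinarith [sqrt3_sq, Real.sqrt_nonneg 3]
lemma sqrt3_ub : Real.sqrt 3 < 1.74 := by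
  nlinarith [sqrt3_sq, Real.sqrt_nonneg 3]
lemma sqrt13_lb : 3.6 < Real.sqrt 13 := by
  nlinarith [sqrt13_sq, Real.sqrt_nonneg 13]
lemma sqrt13_ub : Real.sqrt 13 < 3.61 := by
  nlinarith [sqrt13_sq, Real.sqrt_nonneg 13]

lemma Cfun_at : Cfun (2/3) = Real.sqrt 13 / 3 - 1 := by
  unfold Cfun
  have h1 : (1 + (2/3:ℝ)^4/4 - 2*(2/3)^2) = 13/81 := by norm_num
  have h2 : Real.sqrt (13/81) = Real.sqrt 13 / 9 := by
    rw [show (13/81:ℝ) = 13/81 from rfl, Real.sqrt_div (by norm_num : (0:ℝ) ≤ 13),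
      show (81:ℝ) = 9^2 by norm_num, Real.sqrt_sq (by norm_num : (0:ℝ) ≤ 9)]
  rw [h1, h2]; ring

lemma Cfun_at3 : Cfun (Real.sqrt 3 - 1) = 1 - Real.sqrt 3 := by
  unfold Cfun
  have h0 : (1 + (Real.sqrt 3 - 1)^4/4 - 2*(Real.sqrt 3 - 1)^2) = 0 := by
    linear_combination (Real.sqrt 3 ^2/4 - Real.sqrt 3 + 1/4) * sqrt3_sq
  rw [h0, Real.sqrt_zero]
  linear_combination (3/2) * sqrt3_sq

lemma Cfun_lt (η : ℝ) (h1 : 2/3 < η) (h2 : η ≤ Real.sqrt 3 - 1) :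
    Cfun η < Real.sqrt 13 / 3 - 1 := by
  have hu := sqrt3_sq; have hub := sqrt3_ub
  have ht := sqrt13_sq; have htl := sqrt13_lb; have htu := sqrt13_ub
  have hηu : η < 0.74 := by linarith
  set t := Real.sqrt 13 with htdef
  set q := 1 + η^4/4 - 2*η^2 with hqdef
  have hfac1 : 0 ≤ 2 - 2*η - η^2 := by
    nlinarith [Real.sqrt_nonneg 3]
  have hfac2 : 0 ≤ 2 + 2*η - η^2 := by nlinarith
  have hq : 0 ≤ q := by rw [hqdef]; nlinarith [mul_nonneg hfac1 hfac2]
  have hs := Real.sq_sqrt hq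
  have hsnn := Real.sqrt_nonneg q
  set s := Real.sqrt q with hsdef
  have hR : 0 < t/3 + 2 - 2*η - 3*η^2/2 := by nlinarith
  have hpoly : 0 < 18*η^2 + 60*η + 16 - 3*t*(η+2) := by nlinarith
  have key : 9*q < (t/3 + 2 - 2*η - 3*η^2/2)^2 := by
    nlinarith [mul_pos (by linarith : (0:ℝ) < 3*η - 2) hpoly]
  have hlt : s < (t/3 + 2 - 2*η - 3*η^2/2)/3 := by
    rw [hsdef]
    refine (Real.sqrt_lt' (by linarith)).mpr ?_
    nlinarith [key]
  unfold Cfun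
  rw [← hqdef, ← hsdef]
  linarith

/-- (i) C(2/3) = √13/3 - 1 > 0; (ii) C(√3-1) = 1 - √3 < 0; (iii) C(η) < √13/3 - 1 on
(2/3, √3-1], so sup C over (2/3, √3-1] is √13/3 - 1 and it is not attained;
(iv) C(η) > 0 for η slightly above 2/3. -/
theorem Cfun_properties :
    Cfun (2/3) = Real.sqrt 13 / 3 - 1 ∧
    0 < Real.sqrt 13 / 3 - 1 ∧
    Cfun (Real.sqrt 3 - 1) = 1 - Real.sqrt 3 ∧
    1 - Real.sqrt 3 < 0 ∧
    (∀ η ∈ Set.Ioc (2/3 : ℝ) (Real.sqrt 3 - 1), Cfun η < Real.sqrt 13 / 3 - 1) ∧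
    IsLUB (Cfun '' Set.Ioc (2/3 : ℝ) (Real.sqrt 3 - 1)) (Real.sqrt 13 / 3 - 1) ∧
    (Real.sqrt 13 / 3 - 1) ∉ Cfun '' Set.Ioc (2/3 : ℝ) (Real.sqrt 3 - 1) ∧
    ∃ δ > 0, ∀ η ∈ Set.Ioo (2/3 : ℝ) (2/3 + δ), 0 < Cfun η := by
  have hlt23 : (2/3 : ℝ) < Real.sqrt 3 - 1 := by
    have := sqrt3_lb; linarith
  refine ⟨Cfun_at, by have := sqrt13_lb; linarith, Cfun_at3,
    by have := sqrt3_lb; linarith, fun η hη => Cfun_lt η hη.1 hη.2, ?_, ?_, ?_⟩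
  · constructor
    · rintro x ⟨η, hη, rfl⟩
      exact (Cfun_lt η hη.1 hη.2).le
    · intro b hb
      have hcont : Continuous Cfun := by
        unfold Cfun; fun_prop
      have htend : Filter.Tendsto Cfun
          (nhdsWithin (2/3) (Set.Ioc (2/3 : ℝ) (Real.sqrt 3 - 1))) (nhds (Cfun (2/3))) :=
        (hcont.continuousAt).continuousWithinAt.tendsto
      have hne : (nhdsWithin (2/3) (Set.Ioc (2/3 : ℝ) (Real.sqrt 3 - 1))).NeBot := by
        rw [← mem_closure_iff_nhdsWithin_neBot, closure_Ioc (ne_of_lt hlt23)]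
        exact ⟨le_refl _, hlt23.le⟩
      rw [← Cfun_at]
      refine le_of_tendsto htend ?_
      filter_upwards [self_mem_nhdsWithin] with x hx
      exact hb ⟨x, hx, rfl⟩
  · rintro ⟨η, hη, heq⟩
    exact absurd heq (ne_of_lt (Cfun_lt η hη.1 hη.2))
  · refine ⟨1/100, by norm_num, fun η hη => ?_⟩
    obtain ⟨h1, h2⟩ := hη
    have h2' : η < 0.68 := by linarith
    set q := 1 + η^4/4 - 2*η^2 with hqdef
    have hη2 : η^2 < 0.4624 := by nlinarith
    have hq : 0 ≤ q := by rw [hqdef]; nlinarith [sq_nonneg (η^2)]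
    have hs := Real.sq_sqrt hq
    have hsnn := Real.sqrt_nonneg q
    set s := Real.sqrt q with hsdef
    have hB : 0 < 3 - 2*η - 3*η^2/2 := by nlinarith
    have key : (3 - 2*η - 3*η^2/2)^2 < 9*q := by nlinarith
    have hgt : (3 - 2*η - 3*η^2/2)/3 < s := by
      rw [hsdef]
      refine (Real.lt_sqrt (by linarith)).mpr ?_
      nlinarith [key]
    unfold Cfun
    rw [← hqdef, ← hsdef]
    linarith

end
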